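/- arXiv:2602.07946 — 2 statements merged into one kernel-verified Lean document; each statement's English description precedes it below -/
import Mathlib

section
/- Let C = ⊕_{n≥0} C(n) be an ℕ₀-graded coalgebra, X = ⊕_{n≥0} X(n) an ℕ₀-graded left C-comodule with structure map δ : X → C ⊗ X, and Y ⊆ X a C-subcomodule (not necessarily graded). Fix an integer k > 0. Assume that for all n ≥ k the component map δ_{n−k,k} : X(n) → C(n−k) ⊗ X(k) (the composition of δ restricted to X(n) with the projection onto C(n−k)⊗X(k)) is injective, and that Y is not contained in ⊕_{i=0}^{k−1} X(i). Then Y ∩ ⊕_{i=0}^{k} X(i) ≠ 0. -/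
open TensorProduct

section Aux

variable {k : Type*} [Field k]

/-- Over a field, a nonzero tensor admits a functional on the left factor
detecting it. -/
lemma exists_functional_rTensor_ne_zero {M N : Type*} [AddCommGroup M] [Module k M]
    [AddCommGroup N] [Module k N] {w : M ⊗[k] N} (hw : w ≠ 0) :
    ∃ f : M →ₗ[k] k, (TensorProduct.lid k N) (LinearMap.rTensor N f w) ≠ 0 := by
  classical
  set b := Module.Basis.ofVectorSpace k M
  set e : M ⊗[k] N ≃ₗ[k] (_ →₀ N) :=
    (TensorProduct.congr b.repr (LinearEquiv.refl k N)).trans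
      (TensorProduct.finsuppScalarLeft k N _)
  have hew : e w ≠ 0 := fun h => hw (by simpa using congrArg e.symm h)
  obtain ⟨i, hi⟩ : ∃ i, e w i ≠ 0 := by
    by_contra h
    push_neg at h
    exact hew (Finsupp.ext h)
  refine ⟨b.coord i, ?_⟩
  have key : (TensorProduct.lid k N).toLinearMap ∘ₗ LinearMap.rTensor N (b.coord i)
      = (Finsupp.lapply i) ∘ₗ (e : M ⊗[k] N →ₗ[k] _ →₀ N) := by
    apply TensorProduct.ext'
    intro m n
    simp [e, TensorProduct.finsuppScalarLeft_apply_tmul_apply]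
  have := congrArg (fun g => g w) key
  simpa using this.trans_ne hi

variable {M : Type*} [AddCommGroup M] [Module k M] {A : ℕ → Submodule k M}

/-- Projection onto the `i`-th component of an internal direct sum. -/
noncomputable def projAux (h : DirectSum.IsInternal A) (i : ℕ) : M →ₗ[k] A i :=
  (DirectSum.component k ℕ (fun j => A j) i) ∘ₗ
    (LinearEquiv.ofBijective (DirectSum.coeLinearMap A) h).symm.toLinearMap

lemma projAux_same (h : DirectSum.IsInternal A) {i : ℕ} {x : M} (hx : x ∈ A i) :
    projAux h i x = ⟨x, hx⟩ :=
  h.ofBijective_coeLinearMap_of_mem hx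

lemma projAux_ne (h : DirectSum.IsInternal A) {i j : ℕ} (hij : i ≠ j) {x : M} (hx : x ∈ A i) :
    projAux h j x = 0 :=
  h.ofBijective_coeLinearMap_of_mem_ne hij hx

end Aux

set_option synthInstance.maxHeartbeats 1000000 in
set_option maxHeartbeats 2000000 in
/-- (cf. Heckenberger–Schneider, Proposition 13.2.3.) Let `C` be an
`ℕ₀`-graded coalgebra, `X` an `ℕ₀`-graded left `C`-comodule with structure map
`δ`, and `Y ⊆ X` a subcomodule. Fix `k > 0`. If the component maps
`δ_{n-k,k} : X(n) → C(n-k) ⊗ X(k)` are injective for all `n ≥ k` and `Y` is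
not contained in `⊕_{i<k} X(i)`, then `Y ∩ ⊕_{i≤k} X(i) ≠ 0`. -/
theorem graded_subcomodule_meets_low_degrees
    (k C X : Type*) [Field k]
    [AddCommGroup C] [Module k C] [Coalgebra k C]
    [AddCommGroup X] [Module k X]
    (𝒞 : ℕ → Submodule k C) (𝒳 : ℕ → Submodule k X)
    (hCint : DirectSum.IsInternal 𝒞) (hXint : DirectSum.IsInternal 𝒳)
    -- the coalgebra is graded
    (hcomul : ∀ n : ℕ, ∀ c ∈ 𝒞 n, (Coalgebra.comul (R := k) c : C ⊗[k] C) ∈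
      ⨆ (pq : ℕ × ℕ) (_ : pq.1 + pq.2 = n),
        LinearMap.range (TensorProduct.map (𝒞 pq.1).subtype (𝒞 pq.2).subtype))
    -- the comodule is graded
    (δ : X →ₗ[k] C ⊗[k] X)
    (hδgr : ∀ n : ℕ, ∀ x ∈ 𝒳 n, δ x ∈
      ⨆ (pq : ℕ × ℕ) (_ : pq.1 + pq.2 = n),
        LinearMap.range (TensorProduct.map (𝒞 pq.1).subtype (𝒳 pq.2).subtype))
    -- Y is a subcomodule: δ(Y) ⊆ C ⊗ Y
    (Y : Submodule k X)
    (hY : ∀ y ∈ Y, δ y ∈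
      LinearMap.range (TensorProduct.map (LinearMap.id : C →ₗ[k] C) Y.subtype))
    (k₀ : ℕ) (hk₀ : 0 < k₀)
    -- injectivity of the component maps δ_{n-k,k} on X(n): if the
    -- (n-k₀, k₀)-component of δ(x) vanishes, then x = 0
    (hinj : ∀ n : ℕ, k₀ ≤ n → ∀ x ∈ 𝒳 n,
      δ x ∈ (⨆ (pq : ℕ × ℕ) (_ : pq ≠ (n - k₀, k₀)),
        LinearMap.range (TensorProduct.map (𝒞 pq.1).subtype (𝒳 pq.2).subtype)) →
      x = 0)
    (hYnot : ¬ Y ≤ ⨆ (i : ℕ) (_ : i < k₀), 𝒳 i) :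
    Y ⊓ (⨆ (i : ℕ) (_ : i ≤ k₀), 𝒳 i) ≠ ⊥ := by
  classical
  set eX := LinearEquiv.ofBijective (DirectSum.coeLinearMap 𝒳) hXint with heX
  obtain ⟨y, hyY, hylow⟩ := SetLike.not_le_iff_exists.mp hYnot
  set m := eX.symm y with hm
  have hy0 : y ≠ 0 := fun h => hylow (h ▸ Submodule.zero_mem _)
  have hsupp : m.support.Nonempty := by
    rw [Finset.nonempty_iff_ne_empty]
    intro h
    apply hy0
    have hm0 : m = 0 := DFinsupp.support_eq_empty.mp h
    exact (LinearEquiv.map_eq_zero_iff eX.symm).mp hm0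
  set n := m.support.max' hsupp with hn
  have hmmem : ∀ i : ℕ, ((m i : X)) ∈ 𝒳 i := fun i => (m i).2
  have hdecomp : y = ∑ i ∈ m.support, ((m i : X)) := by
    have h1 := DirectSum.sum_support_of m
    have h2 := congrArg eX h1
    rw [map_sum] at h2
    have h3 : ∀ i ∈ m.support, eX (DirectSum.of (fun j => 𝒳 j) i (m i)) = ((m i : X)) := by
      intro i _
      exact DirectSum.coeLinearMap_of 𝒳 i (m i)
    rw [Finset.sum_congr rfl h3] at h2
    exact (h2.trans (eX.apply_symm_apply y)).symm
  have hle : ∀ i ∈ m.support, i ≤ n := fun i hi => Finset.le_max' _ i hi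
  have hnsupp : n ∈ m.support := Finset.max'_mem _ hsupp
  have hyn : ((m n : X)) ≠ 0 := by
    intro h
    exact DFinsupp.mem_support_iff.mp hnsupp (Subtype.ext h)
  have hkn : k₀ ≤ n := by
    by_contra h
    push_neg at h
    apply hylow
    rw [hdecomp]
    apply Submodule.sum_mem
    intro i hi
    exact Submodule.mem_iSup_of_mem i (Submodule.mem_iSup_of_mem
      (lt_of_le_of_lt (hle i hi) h) (hmmem i))
  -- projections and component maps
  set Φ : C ⊗[k] X →ₗ[k] (𝒞 (n - k₀)) ⊗[k] (𝒳 k₀) :=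
    TensorProduct.map (projAux hCint (n - k₀)) (projAux hXint k₀) with hΦdef
  -- Φ kills the image of C(p) ⊗ X(q) for (p,q) ≠ (n-k₀, k₀)
  have L1 : ∀ (p q : ℕ), (p, q) ≠ (n - k₀, k₀) → ∀ u : (𝒞 p) ⊗[k] (𝒳 q),
      Φ (TensorProduct.map (𝒞 p).subtype (𝒳 q).subtype u) = 0 := by
    intro p q hpq u
    induction u with
    | zero => simp
    | tmul a b =>
      rw [TensorProduct.map_tmul, hΦdef, TensorProduct.map_tmul]
      simp only [Submodule.subtype_apply]
      rcases (by
        by_contra hc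
        push_neg at hc
        exact hpq (by rw [hc.1, hc.2]) : p ≠ n - k₀ ∨ q ≠ k₀) with h | h
      · rw [projAux_ne hCint h a.2, TensorProduct.zero_tmul]
      · rw [projAux_ne hXint h b.2, TensorProduct.tmul_zero]
    | add u v hu hv => rw [map_add, map_add, hu, hv, add_zero]
  -- Φ is a retraction of the inclusion of C(n-k₀) ⊗ X(k₀)
  have L2 : ∀ u : (𝒞 (n - k₀)) ⊗[k] (𝒳 k₀),
      Φ (TensorProduct.map (𝒞 (n - k₀)).subtype (𝒳 k₀).subtype u) = u := by
    intro u
    induction u with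
    | zero => simp
    | tmul a b =>
      rw [TensorProduct.map_tmul, hΦdef, TensorProduct.map_tmul]
      simp only [Submodule.subtype_apply]
      rw [projAux_same hCint a.2, projAux_same hXint b.2]
    | add u v hu hv => rw [map_add, map_add, hu, hv]
  -- the key nonzero tensor component
  set w : (𝒞 (n - k₀)) ⊗[k] (𝒳 k₀) := Φ (δ ((m n : X))) with hw
  have hwne : w ≠ 0 := by
    intro h0
    apply hyn
    apply hinj n hkn _ (hmmem n)
    have h1 := hδgr n _ (hmmem n)
    rw [Submodule.mem_iSup_iff_exists_finsupp] at h1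
    obtain ⟨fsp, hf1, hf2⟩ := h1
    have hΦsum : Φ (fsp.sum fun _ x => x) = ∑ pq ∈ fsp.support, Φ (fsp pq) := by
      rw [Finsupp.sum, map_sum]
    rw [hf2] at hΦsum
    have hcond : (n - k₀) + k₀ = n := Nat.sub_add_cancel hkn
    have hker : ∀ pq : ℕ × ℕ, pq ≠ (n - k₀, k₀) → Φ (fsp pq) = 0 := by
      intro pq hpq
      have hmem := hf1 pq
      by_cases hc : pq.1 + pq.2 = n
      · rw [iSup_pos hc] at hmem
        obtain ⟨u, hu⟩ := hmem
        rw [← hu]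
        exact L1 pq.1 pq.2 (by simpa using hpq) u
      · rw [iSup_neg hc] at hmem
        rw [(Submodule.mem_bot _).mp hmem, map_zero]
    have hfsp0 : fsp (n - k₀, k₀) = 0 := by
      have h5 := hf1 (n - k₀, k₀)
      rw [iSup_pos (show (n - k₀, k₀).1 + (n - k₀, k₀).2 = n from hcond)] at h5
      obtain ⟨u, hu⟩ := h5
      have hsum : ∑ pq ∈ fsp.support, Φ (fsp pq) = Φ (fsp (n - k₀, k₀)) :=
        Finset.sum_eq_single _ (fun pq _ hne => hker pq hne)
          (fun hnot => by rw [Finsupp.notMem_support_iff.mp hnot, map_zero])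
      have hu0 : u = 0 := by
        have hL2 := L2 u
        rw [hu] at hL2
        rw [← hL2, ← hsum, ← hΦsum, ← hw, h0]
      rw [← hu, hu0, map_zero]
    rw [Submodule.mem_iSup_iff_exists_finsupp]
    refine ⟨fsp, ?_, hf2⟩
    intro pq
    by_cases hpq : pq = (n - k₀, k₀)
    · rw [hpq, hfsp0]
      exact Submodule.zero_mem _
    · rw [iSup_pos hpq]
      have h6 := hf1 pq
      by_cases hc : pq.1 + pq.2 = n
      · rw [iSup_pos hc] at h6
        exact h6
      · rw [iSup_neg hc] at h6
        rw [(Submodule.mem_bot _).mp h6]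
        exact Submodule.zero_mem _
  -- choose a functional detecting w
  obtain ⟨f, hf⟩ := exists_functional_rTensor_ne_zero hwne
  set fbar : C →ₗ[k] k := f ∘ₗ projAux hCint (n - k₀) with hfbar
  set F : C ⊗[k] X →ₗ[k] X :=
    (TensorProduct.lid k X).toLinearMap ∘ₗ LinearMap.rTensor X fbar with hF
  have hFtmul : ∀ (c : C) (x : X), F (c ⊗ₜ[k] x) = fbar c • x := by
    intro c x
    simp [hF]
  set G : (𝒞 (n - k₀)) ⊗[k] (𝒳 k₀) →ₗ[k] (𝒳 k₀) :=
    (TensorProduct.lid k (𝒳 k₀)).toLinearMap ∘ₗ LinearMap.rTensor (𝒳 k₀) f with hG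
  have hGw : G w ≠ 0 := by
    simpa [hG] using hf
  set z := F (δ y) with hz
  -- z lies in Y
  have hzY : z ∈ Y := by
    obtain ⟨v, hv⟩ := hY y hyY
    rw [hz, ← hv]
    clear hv
    induction v with
    | zero => simp
    | tmul c yy =>
      rw [TensorProduct.map_tmul]
      simp only [LinearMap.id_coe, id_eq, Submodule.subtype_apply]
      rw [hFtmul]
      exact Submodule.smul_mem _ _ yy.2
    | add u v hu hv =>
      rw [map_add, map_add]
      exact Submodule.add_mem _ hu hv
  -- z lies in the low-degree part
  have hzsup : z ∈ ⨆ (i : ℕ) (_ : i ≤ k₀), 𝒳 i := by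
    rw [hz, hdecomp, map_sum, map_sum]
    apply Submodule.sum_mem
    intro i hi
    have hin : i ≤ n := hle i hi
    have hδi := hδgr i _ (hmmem i)
    have hsub : (⨆ (pq : ℕ × ℕ) (_ : pq.1 + pq.2 = i),
        LinearMap.range (TensorProduct.map (𝒞 pq.1).subtype (𝒳 pq.2).subtype)) ≤
        Submodule.comap F (⨆ (j : ℕ) (_ : j ≤ k₀), 𝒳 j) := by
      refine iSup_le fun pq => iSup_le fun hcond' => ?_
      rintro t ⟨u, rfl⟩
      simp only [Submodule.mem_comap]
      induction u with
      | zero => simp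
      | tmul a b =>
        rw [TensorProduct.map_tmul]
        simp only [Submodule.subtype_apply]
        rw [hFtmul]
        by_cases hq : pq.2 ≤ k₀
        · exact Submodule.smul_mem _ _
            (Submodule.mem_iSup_of_mem pq.2 (Submodule.mem_iSup_of_mem hq b.2))
        · have hp : pq.1 ≠ n - k₀ := by omega
          rw [hfbar]
          simp only [LinearMap.comp_apply]
          rw [projAux_ne hCint hp a.2, map_zero, zero_smul]
          exact Submodule.zero_mem _
      | add u v hu hv =>
        rw [map_add, map_add]
        exact Submodule.add_mem _ hu hv
    exact Submodule.mem_comap.mp (hsub hδi)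
  -- components of degree < n contribute nothing to Φ
  have hΦm : ∀ i ∈ m.support, i ≠ n → Φ (δ ((m i : X))) = 0 := by
    intro i hi hin
    have hδi := hδgr i _ (hmmem i)
    have hsub : (⨆ (pq : ℕ × ℕ) (_ : pq.1 + pq.2 = i),
        LinearMap.range (TensorProduct.map (𝒞 pq.1).subtype (𝒳 pq.2).subtype)) ≤
        LinearMap.ker Φ := by
      refine iSup_le fun pq => iSup_le fun hcond' => ?_
      rintro t ⟨u, rfl⟩
      refine LinearMap.mem_ker.mpr (L1 pq.1 pq.2 ?_ u)
      intro hcontra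
      rw [Prod.mk.injEq] at hcontra
      have hle' : i ≤ n := hle i hi
      omega
    exact LinearMap.mem_ker.mp (hsub hδi)
  -- the k₀-component of z equals G w
  have hcomm : ∀ t : C ⊗[k] X, projAux hXint k₀ (F t) = G (Φ t) := by
    intro t
    induction t with
    | zero => simp
    | tmul c x =>
      rw [hFtmul, map_smul, hΦdef, TensorProduct.map_tmul]
      simp [hG, hfbar]
    | add u v hu hv =>
      rw [map_add, map_add, map_add, map_add, hu, hv]
  have hproj : projAux hXint k₀ z = G w := by
    rw [hz, hdecomp, map_sum, map_sum, map_sum]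
    have : ∀ i ∈ m.support, projAux hXint k₀ (F (δ ((m i : X)))) = G (Φ (δ ((m i : X)))) :=
      fun i _ => hcomm _
    rw [Finset.sum_congr rfl this]
    rw [Finset.sum_eq_single n
      (fun i hi hne => by rw [hΦm i hi hne, map_zero])
      (fun hnot => absurd hnsupp hnot)]
  -- conclusion
  intro hbot
  have hzmem : z ∈ Y ⊓ (⨆ (i : ℕ) (_ : i ≤ k₀), 𝒳 i) := ⟨hzY, hzsup⟩
  rw [hbot] at hzmem
  have hz0 : z = 0 := (Submodule.mem_bot _).mp hzmem
  apply hGw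
  rw [← hproj, hz0, map_zero]
end

section
/- Let C be a coalgebra over a field k equipped with an ℕ₀-filtration {C_n}_{n≥0} (an increasing family of subspaces with union C such that Δ(C_n) ⊆ Σ_{i=0}^n C_i ⊗ C_{n−i}). Let U be a nonzero left C-comodule. Then there exists a nonzero u ∈ U with δ(u) ∈ C₀ ⊗ U. -/
open TensorProduct

lemma aux_sep (k C U : Type*) [Field k] [AddCommGroup C] [Module k C]
    [AddCommGroup U] [Module k U] (W : Submodule k C) (x : C ⊗[k] U)
    (hx : x ∉ LinearMap.range (TensorProduct.map W.subtype (LinearMap.id : U →ₗ[k] U))) :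
    ∃ f : C →ₗ[k] k, (∀ w ∈ W, f w = 0) ∧
      (TensorProduct.lid k U) ((TensorProduct.map f (LinearMap.id : U →ₗ[k] U)) x) ≠ 0 := by
  classical
  set b := Module.Basis.ofVectorSpace k U with hb
  set e : C ⊗[k] U ≃ₗ[k] (Module.Basis.ofVectorSpaceIndex k U →₀ C) :=
    (TensorProduct.congr (LinearEquiv.refl k C) b.repr).trans
      (TensorProduct.finsuppScalarRight k k C _) with he
  have hsymm : ∀ (i) (m : C), e.symm (Finsupp.single i m) = m ⊗ₜ[k] (b i) := by
    intro i m
    simp only [he, LinearEquiv.trans_symm, LinearEquiv.trans_apply,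
      TensorProduct.finsuppScalarRight_symm_apply_single, TensorProduct.congr_symm_tmul,
      LinearEquiv.refl_symm, LinearEquiv.refl_apply]
    rw [Module.Basis.repr_symm_apply, Finsupp.linearCombination_single, one_smul]
  -- step A
  obtain ⟨i, hi⟩ : ∃ i, e x i ∉ W := by
    by_contra h
    push_neg at h
    apply hx
    have h1 : x = (e x).sum fun i m => e.symm (Finsupp.single i m) := by
      conv_lhs => rw [← e.symm_apply_apply x]
      rw [← map_finsuppSum, Finsupp.sum_single]
    rw [h1]
    apply Submodule.sum_mem
    intro i _
    dsimp only
    rw [hsymm]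
    exact ⟨⟨e x i, h i⟩ ⊗ₜ[k] b i, rfl⟩
  -- step B: a functional vanishing on W, nonzero on e x i
  obtain ⟨g, hg⟩ : ∃ g : Module.Dual k (C ⧸ W), g (W.mkQ (e x i)) ≠ 0 := by
    by_contra h
    push_neg at h
    have := (Module.forall_dual_apply_eq_zero_iff k (W.mkQ (e x i))).mp h
    rw [Submodule.mkQ_apply, Submodule.Quotient.mk_eq_zero] at this
    exact hi this
  refine ⟨g ∘ₗ W.mkQ, fun w hw => by simp [(Submodule.Quotient.mk_eq_zero W).mpr hw], ?_⟩
  set f : C →ₗ[k] k := g ∘ₗ W.mkQ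
  -- step C: repr of the image at i equals f (e x i)
  have hC : ∀ y : C ⊗[k] U,
      b.repr ((TensorProduct.lid k U) ((TensorProduct.map f LinearMap.id) y)) i = f (e y i) := by
    intro y
    induction y using TensorProduct.induction_on with
    | zero => simp
    | tmul c u =>
        simp only [TensorProduct.map_tmul, TensorProduct.lid_tmul, LinearMap.id_coe, id_eq,
          map_smul, Finsupp.smul_apply, he, LinearEquiv.trans_apply, TensorProduct.congr_tmul,
          LinearEquiv.refl_apply, TensorProduct.finsuppScalarRight_apply_tmul_apply, map_smul]
        simp [smul_eq_mul, mul_comm]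
    | add y z hy hz => simp [map_add, hy, hz]
  intro hv
  have := hC x
  rw [hv] at this
  simp only [map_zero, Finsupp.coe_zero, Pi.zero_apply] at this
  exact hg this.symm

lemma aux_range_mono (k C U : Type*) [Field k] [AddCommGroup C] [Module k C]
    [AddCommGroup U] [Module k U] {W W' : Submodule k C} (h : W ≤ W') :
    LinearMap.range (TensorProduct.map W.subtype (LinearMap.id : U →ₗ[k] U)) ≤
      LinearMap.range (TensorProduct.map W'.subtype (LinearMap.id : U →ₗ[k] U)) := by
  rintro _ ⟨y, rfl⟩
  refine ⟨TensorProduct.map (Submodule.inclusion h) LinearMap.id y, ?_⟩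
  rw [← LinearMap.comp_apply, ← TensorProduct.map_comp]
  congr 1

/-- Let `C` be a coalgebra with an `ℕ₀`-filtration `{C_n}` (increasing, with
union `C`, and `Δ(C_n) ⊆ Σ_{i≤n} C_i ⊗ C_{n-i}`), and let `U` be a nonzero
left `C`-comodule. Then there exists a nonzero `u ∈ U` with `δ(u) ∈ C₀ ⊗ U`. -/
theorem filtered_coalgebra_comodule_exists_low
    (k C U : Type*) [Field k]
    [AddCommGroup C] [Module k C] [Coalgebra k C]
    [AddCommGroup U] [Module k U] [Nontrivial U]
    (Cfil : ℕ → Submodule k C)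
    (hmono : Monotone Cfil)
    (hunion : (⨆ n : ℕ, Cfil n) = ⊤)
    (hΔ : ∀ n : ℕ, ∀ c ∈ Cfil n, (Coalgebra.comul (R := k) c : C ⊗[k] C) ∈
      ⨆ (i : ℕ) (_ : i ≤ n),
        LinearMap.range (TensorProduct.map (Cfil i).subtype (Cfil (n - i)).subtype))
    (δ : U →ₗ[k] C ⊗[k] U)
    -- counit axiom for the comodule
    (hcounit : ∀ u : U,
      (TensorProduct.lid k U)
        ((TensorProduct.map (Coalgebra.counit (R := k)) (LinearMap.id : U →ₗ[k] U))
          (δ u)) = u)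
    -- coassociativity axiom for the comodule
    (hcoassoc : ∀ u : U,
      (TensorProduct.map (Coalgebra.comul (R := k)) (LinearMap.id : U →ₗ[k] U)) (δ u)
        = (TensorProduct.assoc k C C U).symm
            ((TensorProduct.map (LinearMap.id : C →ₗ[k] C) δ) (δ u))) :
    ∃ u : U, u ≠ 0 ∧ δ u ∈
      LinearMap.range (TensorProduct.map (Cfil 0).subtype (LinearMap.id : U →ₗ[k] U)) := by
  classical
  set R : ℕ → Submodule k (C ⊗[k] U) :=
    fun n => LinearMap.range (TensorProduct.map (Cfil n).subtype (LinearMap.id : U →ₗ[k] U))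
    with hR
  have Rmono : Monotone R := fun a b hab => aux_range_mono k C U (hmono hab)
  obtain ⟨u₀, hu₀⟩ := exists_ne (0 : U)
  -- δ u₀ lies in some R n
  have hex : ∃ n, δ u₀ ∈ R n := by
    have htop : (⨆ n, R n) = ⊤ := by
      rw [eq_top_iff, ← TensorProduct.span_tmul_eq_top k C U, Submodule.span_le]
      rintro _ ⟨c, u, rfl⟩
      have hc : c ∈ ⨆ n, Cfil n := hunion ▸ Submodule.mem_top
      obtain ⟨n, hn⟩ := (Submodule.mem_iSup_of_directed _ hmono.directed_le).mp hc
      exact Submodule.mem_iSup_of_mem n ⟨⟨c, hn⟩ ⊗ₜ[k] u, rfl⟩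
    have : δ u₀ ∈ ⨆ n, R n := htop ▸ Submodule.mem_top
    exact (Submodule.mem_iSup_of_directed _ Rmono.directed_le).mp this
  set n := Nat.find hex with hn
  have hmem : δ u₀ ∈ R n := Nat.find_spec hex
  match hn' : n, hmem with
  | 0, hmem => exact ⟨u₀, hu₀, hmem⟩
  | (m+1), hmem =>
  have hnot : δ u₀ ∉ R m := Nat.find_min hex (by omega)
  obtain ⟨f, hf0, hv⟩ := aux_sep k C U (Cfil m) (δ u₀) hnot
  set v : U := (TensorProduct.lid k U)
    ((TensorProduct.map f (LinearMap.id : U →ₗ[k] U)) (δ u₀)) with hvdef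
  refine ⟨v, hv, ?_⟩
  set F : C ⊗[k] C →ₗ[k] C :=
    (TensorProduct.lid k C).toLinearMap ∘ₗ TensorProduct.map f (LinearMap.id : C →ₗ[k] C)
    with hF
  have hFtmul : ∀ (a b : C), F (a ⊗ₜ[k] b) = f a • b := by
    intro a b; simp [hF]
  -- δ v = (F ⊗ id) ((Δ ⊗ id) (δ u₀))
  have key : δ v = TensorProduct.map F (LinearMap.id : U →ₗ[k] U)
      ((TensorProduct.map (Coalgebra.comul (R := k)) (LinearMap.id : U →ₗ[k] U)) (δ u₀)) := by
    rw [hcoassoc]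
    have claim : ∀ x : C ⊗[k] U,
        δ ((TensorProduct.lid k U) ((TensorProduct.map f (LinearMap.id : U →ₗ[k] U)) x))
          = TensorProduct.map F (LinearMap.id : U →ₗ[k] U)
              ((TensorProduct.assoc k C C U).symm
                ((TensorProduct.map (LinearMap.id : C →ₗ[k] C) δ) x)) := by
      intro x
      induction x using TensorProduct.induction_on with
      | zero => simp
      | add y z hy hz => simp only [map_add, hy, hz]
      | tmul c u =>
          simp only [TensorProduct.map_tmul, TensorProduct.lid_tmul, LinearMap.id_coe, id_eq,
            map_smul]
          induction (δ u) using TensorProduct.induction_on with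
          | zero => simp
          | add y z hy hz => simp only [tmul_add, map_add, hy, hz, smul_add]
          | tmul c' u' =>
              simp only [TensorProduct.assoc_symm_tmul, TensorProduct.map_tmul, hFtmul,
                LinearMap.id_coe, id_eq, smul_tmul']
    exact claim (δ u₀)
  rw [key]
  -- membership
  obtain ⟨y, hy⟩ := hmem
  rw [← hy]
  clear hy key hv hvdef
  induction y using TensorProduct.induction_on with
  | zero => simp
  | add y z hy hz => simp only [map_add]; exact Submodule.add_mem _ hy hz
  | tmul c u =>
      obtain ⟨c, hc⟩ := c
      simp only [TensorProduct.map_tmul, Submodule.coe_subtype, LinearMap.id_coe, id_eq]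
      have hF0 : F (Coalgebra.comul (R := k) c) ∈ Cfil 0 := by
        have hsup := hΔ (m+1) c hc
        have hle : (⨆ (i : ℕ) (_ : i ≤ m+1),
            LinearMap.range (TensorProduct.map (Cfil i).subtype (Cfil (m+1-i)).subtype)) ≤
            (Cfil 0).comap F := by
          refine iSup_le fun i => iSup_le fun hi => ?_
          rintro _ ⟨w, rfl⟩
          induction w using TensorProduct.induction_on with
          | zero => simp
          | add y z hy hz => simp only [map_add]; exact Submodule.add_mem _ hy hz
          | tmul a b =>
              obtain ⟨a, ha⟩ := a
              obtain ⟨b, hb⟩ := b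
              simp only [TensorProduct.map_tmul, Submodule.coe_subtype, Submodule.mem_comap,
                hFtmul]
              rcases eq_or_lt_of_le hi with h | h
              · have : m + 1 - i = 0 := by omega
                rw [this] at hb
                exact Submodule.smul_mem _ _ hb
              · have : f a = 0 := hf0 a (hmono (by omega : i ≤ m) ha)
                rw [this, zero_smul]
                exact Submodule.zero_mem _
        exact hle hsup
      exact ⟨⟨F (Coalgebra.comul (R := k) c), hF0⟩ ⊗ₜ[k] u, rfl⟩
end
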